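/- Let α > 0 and Y₀(y) = (1 − |y|^α)/(1 + |y|^α). Then the function y ↦ (2α²|y|^{α−2}/(1 + |y|^α)²) · Y₀(y) · log|y| is integrable on ℝ² and ∫_{ℝ²} (2α²|y|^{α−2}/(1 + |y|^α)²) · Y₀(y) · log|y| dy = −4π. -/

import Mathlib

open MeasureTheory Real

noncomputable section

/-- The plane `ℝ²`. -/
abbrev Plane := EuclideanSpace ℝ (Fin 2)

/-- The Laplacian of `f : ℝ² → ℝ`: the sum of the two second partial derivatives. -/
noncomputable def lap (f : Plane → ℝ) (x : Plane) : ℝ :=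
  ∑ i : Fin 2,
    fderiv ℝ (fun y => fderiv ℝ f y (EuclideanSpace.single i 1)) x (EuclideanSpace.single i 1)

/-- The standard singular bubble `U(x) = log(2α²δ^α / (δ^α + |x-ξ|^α)²)`. -/
noncomputable def bubble (α δ : ℝ) (ξ : Plane) (x : Plane) : ℝ :=
  Real.log (2 * α ^ 2 * δ ^ α / (δ ^ α + ‖x - ξ‖ ^ α) ^ 2)

/-- `Y₀(y) = (1 - |y|^α)/(1 + |y|^α)`. -/
noncomputable def Ynull (α : ℝ) (y : Plane) : ℝ :=
  (1 - ‖y‖ ^ α) / (1 + ‖y‖ ^ α)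

open Set Filter Metric Topology

/-- The radial profile of the integrand. -/
noncomputable def gfun (α : ℝ) (r : ℝ) : ℝ :=
  2 * α ^ 2 * r ^ (α - 2) / (1 + r ^ α) ^ 2 * ((1 - r ^ α) / (1 + r ^ α)) * Real.log r

/-- An antiderivative of `r * gfun α r` on `(0, ∞)`. -/
noncomputable def Ffun (α : ℝ) (r : ℝ) : ℝ :=
  2 * α * (r ^ α * Real.log r) / (1 + r ^ α) ^ 2 + 2 / (1 + r ^ α)

lemma measurable_gfun (α : ℝ) : Measurable (gfun α) := by
  unfold gfun
  measurability

lemma hasDerivAt_Ffun (α : ℝ) {r : ℝ} (hr : 0 < r) :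
    HasDerivAt (Ffun α) (r * gfun α r) r := by
  have hs : 0 < r ^ α := Real.rpow_pos_of_pos hr α
  have hD : 0 < 1 + r ^ α := by linarith
  have hu : HasDerivAt (fun x : ℝ => x ^ α) (α * r ^ (α - 1)) r :=
    Real.hasDerivAt_rpow_const (Or.inl hr.ne')
  have hlog := Real.hasDerivAt_log hr.ne'
  have h1 : HasDerivAt (fun x : ℝ => x ^ α * Real.log x)
      (α * r ^ (α - 1) * Real.log r + r ^ α * r⁻¹) r := hu.mul hlog
  have hden : HasDerivAt (fun x : ℝ => (1 + x ^ α) ^ 2)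
      ((2 : ℕ) * (1 + r ^ α) ^ 1 * (α * r ^ (α - 1))) r := by
    have h := ((hasDerivAt_const r (1 : ℝ)).add hu).pow 2
    simp at h ⊢
    exact h
  have hA := (h1.const_mul (2 * α)).div hden (by positivity)
  have hB := (hasDerivAt_const r (2 : ℝ)).div ((hasDerivAt_const r (1 : ℝ)).add hu) hD.ne'
  have := hA.add hB
  convert this using 1
  · rfl
  · rfl
  · rfl
  have e1 : r ^ (α - 1) = r ^ α / r := by
    rw [Real.rpow_sub hr, Real.rpow_one]
  have e2 : r ^ (α - 2) = r ^ α / r ^ 2 := by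
    rw [Real.rpow_sub hr, show ((2 : ℝ)) = ((2 : ℕ) : ℝ) by norm_num, Real.rpow_natCast]
  unfold gfun
  rw [e1, e2]
  simp only [Pi.add_apply]
  field_simp [hr.ne', hD.ne']
  ring

lemma deriv_nonpos (α : ℝ) (hα : 0 < α) {r : ℝ} (hr : 0 < r) : r * gfun α r ≤ 0 := by
  have hs : 0 < r ^ α := Real.rpow_pos_of_pos hr α
  have hD : 0 < 1 + r ^ α := by linarith
  have h1 : (1 - r ^ α) * Real.log r ≤ 0 := by
    rcases le_total r 1 with h | h
    · exact mul_nonpos_of_nonneg_of_nonpos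
        (by nlinarith [Real.rpow_le_one hr.le h hα.le])
        (Real.log_nonpos hr.le h)
    · exact mul_nonpos_of_nonpos_of_nonneg
        (by nlinarith [Real.one_le_rpow h hα.le])
        (Real.log_nonneg h)
  have he : r * gfun α r
      = (2 * α ^ 2 * r ^ (α - 2) / ((1 + r ^ α) ^ 2 * (1 + r ^ α)) * r)
        * ((1 - r ^ α) * Real.log r) := by
    unfold gfun; field_simp
  rw [he]
  apply mul_nonpos_of_nonneg_of_nonpos _ h1
  have h2 : (0:ℝ) ≤ r ^ (α - 2) := Real.rpow_nonneg hr.le _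
  have h3 : (0:ℝ) ≤ (1 + r ^ α) ^ 2 * (1 + r ^ α) := by positivity
  have h4 : (0:ℝ) ≤ 2 * α ^ 2 * r ^ (α - 2) := by positivity
  exact mul_nonneg (div_nonneg h4 h3) hr.le

lemma tendsto_Ffun_atTop (α : ℝ) (hα : 0 < α) : Tendsto (Ffun α) atTop (𝓝 0) := by
  have h1 : Tendsto (fun r : ℝ => 2 * α * (r ^ α * Real.log r) / (1 + r ^ α) ^ 2)
      atTop (𝓝 0) := by
    have hb : Tendsto (fun r : ℝ => 2 * α * (Real.log r / r ^ α)) atTop (𝓝 0) := by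
      simpa using ((isLittleO_log_rpow_atTop hα).tendsto_div_nhds_zero).const_mul (2 * α)
    apply squeeze_zero' ?_ ?_ hb
    · filter_upwards [eventually_ge_atTop (1:ℝ)] with r hr
      have hs : 0 < r ^ α := Real.rpow_pos_of_pos (by linarith) α
      have hl : 0 ≤ Real.log r := Real.log_nonneg hr
      positivity
    · filter_upwards [eventually_ge_atTop (1:ℝ)] with r hr
      have hr0 : (0:ℝ) < r := by linarith
      have hs : 0 < r ^ α := Real.rpow_pos_of_pos hr0 α
      have hl : 0 ≤ Real.log r := Real.log_nonneg hr
      have hnum : 0 ≤ 2 * α * (r ^ α * Real.log r) := by positivity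
      have hle : (r ^ α) ^ 2 ≤ (1 + r ^ α) ^ 2 := by nlinarith
      calc 2 * α * (r ^ α * Real.log r) / (1 + r ^ α) ^ 2
          ≤ 2 * α * (r ^ α * Real.log r) / (r ^ α) ^ 2 :=
            div_le_div_of_nonneg_left hnum (by positivity) hle
        _ = 2 * α * (Real.log r / r ^ α) := by field_simp
  have h2 : Tendsto (fun r : ℝ => 2 / (1 + r ^ α)) atTop (𝓝 0) :=
    tendsto_const_nhds.div_atTop
      (tendsto_atTop_add_const_left atTop 1 (tendsto_rpow_atTop hα))
  have := h1.add h2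
  simp at this
  exact this

lemma Ffun_zero (α : ℝ) (hα : 0 < α) : Ffun α 0 = 2 := by
  simp [Ffun, Real.zero_rpow hα.ne']

lemma continuousWithinAt_Ffun (α : ℝ) (hα : 0 < α) :
    ContinuousWithinAt (Ffun α) (Set.Ici 0) 0 := by
  rw [← continuousWithinAt_Ioi_iff_Ici]
  have hml : Tendsto (fun r : ℝ => r ^ α * Real.log r) (𝓝[>] 0) (𝓝 0) :=
    (tendsto_log_mul_rpow_nhdsGT_zero hα).congr fun x => mul_comm _ _
  have hrp : Tendsto (fun r : ℝ => r ^ α) (𝓝[>] 0) (𝓝 0) := by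
    have h := (Real.continuousAt_rpow_const 0 α (Or.inr hα.le)).continuousWithinAt
      (s := Set.Ioi (0:ℝ))
    simpa [ContinuousWithinAt, Real.zero_rpow hα.ne'] using h
  have hden : Tendsto (fun r : ℝ => (1 + r ^ α) ^ 2) (𝓝[>] 0) (𝓝 1) := by
    have := ((tendsto_const_nhds (α := ℝ) (x := (1:ℝ))).add hrp).pow 2
    simpa using this
  have hden1 : Tendsto (fun r : ℝ => 1 + r ^ α) (𝓝[>] 0) (𝓝 1) := by
    simpa using (tendsto_const_nhds (α := ℝ) (x := (1:ℝ))).add hrp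
  have hall : Tendsto (Ffun α) (𝓝[>] 0) (𝓝 2) := by
    have hterm1 := ((hml.const_mul (2 * α)).div hden one_ne_zero)
    have hterm2 := (tendsto_const_nhds (α := ℝ) (x := (2:ℝ))).div hden1 one_ne_zero
    have := hterm1.add hterm2
    simp at this
    exact this
  have : ContinuousWithinAt (Ffun α) (Set.Ioi 0) 0 := by
    unfold ContinuousWithinAt
    rw [Ffun_zero α hα]
    exact hall
  exact this

lemma oneD (α : ℝ) (hα : 0 < α) :
    IntegrableOn (fun y => y * gfun α y) (Set.Ioi 0) volume ∧
      ∫ y in Set.Ioi (0:ℝ), y * gfun α y = -2 := by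
  have hcont := continuousWithinAt_Ffun α hα
  have hderiv : ∀ x ∈ Set.Ioi (0:ℝ), HasDerivAt (Ffun α) (x * gfun α x) x :=
    fun x hx => hasDerivAt_Ffun α hx
  have hpos : ∀ x ∈ Set.Ioi (0:ℝ), x * gfun α x ≤ 0 :=
    fun x hx => deriv_nonpos α hα hx
  have htop := tendsto_Ffun_atTop α hα
  refine ⟨integrableOn_Ioi_deriv_of_nonpos hcont hderiv hpos htop, ?_⟩
  rw [integral_Ioi_of_hasDerivAt_of_nonpos hcont hderiv hpos htop, Ffun_zero α hα]
  norm_num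

lemma integrable_radial {g : ℝ → ℝ} (hg : Measurable g)
    (h1 : IntegrableOn (fun r => r * g r) (Set.Ioi 0) volume) :
    Integrable (fun x : Plane => g ‖x‖) volume := by
  have h0 : MeasurableSet ({(0:Plane)}ᶜ) := (measurableSet_singleton _).compl
  have hstep : Integrable (fun y : Set.Ioi (0:ℝ) => g y.1) (Measure.volumeIoiPow 1) := by
    have h' : Integrable (fun y : Set.Ioi (0:ℝ) =>
        (ENNReal.ofReal (y.1 ^ 1)).toReal • g y.1) (Measure.comap Subtype.val volume) := by
      have he : (fun y : Set.Ioi (0:ℝ) => (ENNReal.ofReal (y.1 ^ 1)).toReal • g y.1)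
          = (fun r : ℝ => r * g r) ∘ (Subtype.val) := by
        funext y
        have hy : (0:ℝ) ≤ y.1 := le_of_lt y.2
        simp [ENNReal.toReal_ofReal hy, smul_eq_mul]
      rw [he, ← (MeasurableEmbedding.subtype_coe measurableSet_Ioi).integrable_map_iff,
        map_comap_subtype_coe measurableSet_Ioi]
      exact h1
    rw [Measure.volumeIoiPow]
    exact (integrable_withDensity_iff_integrable_smul'
      ((measurable_subtype_coe.pow_const 1).ennreal_ofReal)
      (Filter.Eventually.of_forall fun x => ENNReal.ofReal_lt_top)).2 h'
  have hfin : Integrable (fun p : Metric.sphere (0:Plane) 1 × Set.Ioi (0:ℝ) => g p.2.1)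
      ((volume : Measure Plane).toSphere.prod (Measure.volumeIoiPow 1)) := by
    have hm : Measurable (fun p : Metric.sphere (0:Plane) 1 × Set.Ioi (0:ℝ) => g p.2.1) :=
      hg.comp (measurable_subtype_coe.comp measurable_snd)
    refine (integrable_prod_iff' hm.aestronglyMeasurable).2 ⟨?_, ?_⟩
    · exact Filter.Eventually.of_forall fun y => by
        simpa using integrable_const (μ := (volume : Measure Plane).toSphere) (g y.1)
    · simp only [integral_const, smul_eq_mul]
      exact hstep.norm.const_mul _
  have hmp := (volume : Measure Plane).measurePreserving_homeomorphUnitSphereProd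
  rw [show Module.finrank ℝ Plane - 1 = 1 by simp [finrank_euclideanSpace_fin]] at hmp
  have hcomp := (hmp.integrable_comp_emb (Homeomorph.measurableEmbedding _)).2 hfin
  have hres : IntegrableOn (fun x : Plane => g ‖x‖) {(0:Plane)}ᶜ volume := by
    rw [IntegrableOn, ← map_comap_subtype_coe h0,
      (MeasurableEmbedding.subtype_coe h0).integrable_map_iff]
    convert hcomp using 1
    funext x
    simp [homeomorphUnitSphereProd]
  rwa [IntegrableOn, MeasureTheory.restrict_compl_singleton] at hres

lemma volume_ball_plane : (volume (Metric.ball (0:Plane) 1)).toReal = π := by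
  rw [EuclideanSpace.volume_ball]
  have h2 : ((Fintype.card (Fin 2) : ℝ)) = 2 := by simp
  rw [show (Fintype.card (Fin 2)) = 2 by simp]
  have hg : Real.Gamma ((2:ℕ) / 2 + 1) = 1 := by
    norm_num
  norm_num [hg, Real.sq_sqrt Real.pi_pos.le, ENNReal.toReal_ofReal Real.pi_pos.le]

theorem integral_kernel_Ynull_log (α : ℝ) (hα : 0 < α) :
    Integrable (fun y : Plane =>
        (2 * α ^ 2 * ‖y‖ ^ (α - 2) / (1 + ‖y‖ ^ α) ^ 2) * Ynull α y * Real.log ‖y‖) volume ∧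
      ∫ y : Plane,
          (2 * α ^ 2 * ‖y‖ ^ (α - 2) / (1 + ‖y‖ ^ α) ^ 2) * Ynull α y * Real.log ‖y‖ =
        -(4 * π) := by
  have hfun : (fun y : Plane =>
      (2 * α ^ 2 * ‖y‖ ^ (α - 2) / (1 + ‖y‖ ^ α) ^ 2) * Ynull α y * Real.log ‖y‖)
      = fun y : Plane => gfun α ‖y‖ := by
    funext y
    simp only [gfun, Ynull]
  rw [hfun]
  obtain ⟨hint, hval⟩ := oneD α hα
  refine ⟨integrable_radial (measurable_gfun α) hint, ?_⟩
  rw [integral_fun_norm_addHaar volume (gfun α)]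
  have hdim : Module.finrank ℝ Plane = 2 := finrank_euclideanSpace_fin
  rw [hdim]
  have hio : ∫ y in Set.Ioi (0:ℝ), y ^ (2 - 1) • gfun α y = -2 := by
    simpa [smul_eq_mul] using hval
  rw [hio, measureReal_def, volume_ball_plane]
  simp only [nsmul_eq_mul, smul_eq_mul]
  ring
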